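/- Consider a linear-polyhedral multistage problem: for each t ∈ {0,…,T−1} and w ∈ W_{t+1}, c_t^w(x,u) = max_{i∈I_{t,w}} ( ⟨c^{i,t,w}, (x,u)⟩ + d^{i,t,w} ) on a nonempty convex polyhedron P_{t,w} ⊆ ℝ^n × ℝ^m and +∞ outside, and f_t^w(x,u) = A_{t,w} x + B_{t,w} u; the final cost ψ(x) = max_{i∈I_T}( ⟨c^i_T, x⟩ + d^i_T ) for x in a nonempty convex polytope X_T and +∞ outside. Define value functions by V_T = ψ and V_t(x) = ∑_{w∈W_{t+1}} p_{t+1,w} · inf_{u∈ℝ^m} ( c_t^w(x,u) + V_{t+1}(f_t^w(x,u)) ). If for every t < T, every w ∈ W_{t+1} and every x ∈ ℝ^n one has inf_{u∈ℝ^m}( c_t^w(x,u) + V_{t+1}(f_t^w(x,u)) ) > −∞, and each V_t is finite at some point, then V_t is a polyhedral function for every t ∈ {0,…,T}. -/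

import Mathlib

open scoped RealInnerProductSpace

/-- A convex polyhedron: an intersection of finitely many closed halfspaces
(each halfspace being the sublevel set of a linear functional). -/
def IsPolyhedron {E : Type*} [AddCommGroup E] [Module ℝ E] (S : Set E) : Prop :=
  ∃ (k : ℕ) (φ : Fin k → E →ₗ[ℝ] ℝ) (b : Fin k → ℝ),
    S = ⋂ i, {z | φ i z ≤ b i}

/-- A polyhedral function `g : E → ℝ ∪ {+∞}`: its epigraph
`{(z, r) : g z ≤ r}` is a nonempty convex polyhedron in `E × ℝ`. -/
def IsPolyhedralFn {E : Type*} [AddCommGroup E] [Module ℝ E] (g : E → EReal) : Prop :=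
  {q : E × ℝ | g q.1 ≤ (q.2 : EReal)}.Nonempty ∧
  IsPolyhedron {q : E × ℝ | g q.1 ≤ (q.2 : EReal)}

section Aux

variable {E F G : Type*} [AddCommGroup E] [Module ℝ E] [AddCommGroup F] [Module ℝ F]
  [AddCommGroup G] [Module ℝ G]

lemma isPolyhedron_of_fintype {ι : Type*} [Fintype ι] (φ : ι → E →ₗ[ℝ] ℝ) (b : ι → ℝ)
    {S : Set E} (hS : S = ⋂ i, {z | φ i z ≤ b i}) : IsPolyhedron S := by
  classical
  obtain ⟨e⟩ : Nonempty (ι ≃ Fin (Fintype.card ι)) := ⟨Fintype.equivFin ι⟩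
  refine ⟨Fintype.card ι, fun j => φ (e.symm j), fun j => b (e.symm j), ?_⟩
  rw [hS]
  ext z
  simp only [Set.mem_iInter, Set.mem_setOf_eq]
  exact ⟨fun h j => h _, fun h i => by simpa using h (e i)⟩

lemma IsPolyhedron.preimage {S : Set F} (hS : IsPolyhedron S) (L : E →ₗ[ℝ] F) :
    IsPolyhedron (L ⁻¹' S) := by
  obtain ⟨k, φ, b, hS⟩ := hS
  refine ⟨k, fun i => (φ i).comp L, b, ?_⟩
  rw [hS]; ext z; simp [Set.mem_iInter]

lemma IsPolyhedron.image_equiv {S : Set E} (hS : IsPolyhedron S) (e : E ≃ₗ[ℝ] F) :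
    IsPolyhedron (e '' S) := by
  have : e '' S = e.symm.toLinearMap ⁻¹' S := by
    rw [LinearEquiv.image_eq_preimage_symm]; rfl
  rw [this]
  exact hS.preimage _

/-- decomposition of a linear functional on `G × ℝ` -/
lemma lin_decomp (φ : (G × ℝ) →ₗ[ℝ] ℝ) (y : G) (s : ℝ) :
    φ (y, s) = φ (y, 0) + s * φ (0, 1) := by
  have h : (y, s) = (y, (0:ℝ)) + s • ((0:G), (1:ℝ)) := by simp [Prod.ext_iff]
  rw [h, map_add, map_smul, smul_eq_mul]

/-- shift in the last coordinate -/
lemma lin_shift (φ : (G × ℝ) →ₗ[ℝ] ℝ) (y : G) (s c : ℝ) :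
    φ (y, s - c) = φ (y, s) - c * φ (0, 1) := by
  rw [lin_decomp φ y (s - c), lin_decomp φ y s]; ring

/-- Fourier–Motzkin elimination: the projection of a polyhedron in `E × ℝ` to `E`
is a polyhedron. -/
lemma poly_proj_real {S : Set (E × ℝ)} (hS : IsPolyhedron S) :
    IsPolyhedron (Prod.fst '' S) := by
  classical
  obtain ⟨k, φ, b, hS⟩ := hS
  set ψ : Fin k → E →ₗ[ℝ] ℝ := fun i => (φ i).comp (LinearMap.inl ℝ E ℝ) with hψ
  set a : Fin k → ℝ := fun i => φ i (0, 1) with ha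
  have hdec : ∀ i (x : E) (r : ℝ), φ i (x, r) = ψ i x + a i * r := by
    intro i x r
    have hxr : (x, r) = (x, (0:ℝ)) + r • ((0:E), (1:ℝ)) := by
      simp [Prod.ext_iff]
    rw [hxr, map_add, map_smul, smul_eq_mul]
    simp [hψ, ha, mul_comm]
  set Φ : (Fin k ⊕ Fin k × Fin k) → E →ₗ[ℝ] ℝ := Sum.elim
    (fun i => if a i = 0 then ψ i else 0)
    (fun ij => if a ij.1 < 0 ∧ 0 < a ij.2
      then a ij.2 • ψ ij.1 + (-(a ij.1)) • ψ ij.2 else 0) with hΦ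
  set β : (Fin k ⊕ Fin k × Fin k) → ℝ := Sum.elim
    (fun i => if a i = 0 then b i else 0)
    (fun ij => if a ij.1 < 0 ∧ 0 < a ij.2
      then a ij.2 * b ij.1 + (-(a ij.1)) * b ij.2 else 0) with hβ
  refine isPolyhedron_of_fintype Φ β ?_
  ext x
  simp only [Set.mem_image, Set.mem_iInter, Set.mem_setOf_eq]
  constructor
  · rintro ⟨⟨x', r⟩, hmem, rfl⟩
    show ∀ i, Φ i x' ≤ β i
    have h : ∀ i, ψ i x' + a i * r ≤ b i := by
      intro i
      have := (hS ▸ hmem : (x', r) ∈ ⋂ i, {z | φ i z ≤ b i})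
      rw [Set.mem_iInter] at this
      have := this i
      rwa [Set.mem_setOf_eq, hdec] at this
    rintro (i | ⟨i, j⟩)
    · by_cases hai : a i = 0
      · simp only [hΦ, hβ, Sum.elim_inl, if_pos hai]
        have := h i; rw [hai] at this; linarith
      · simp [hΦ, hβ, Sum.elim_inl, if_neg hai]
    · by_cases hij : a i < 0 ∧ 0 < a j
      · simp only [hΦ, hβ, Sum.elim_inr, if_pos hij, LinearMap.add_apply,
          LinearMap.smul_apply, smul_eq_mul]
        have h1 : a j * (ψ i x' + a i * r) ≤ a j * b i :=
          mul_le_mul_of_nonneg_left (h i) hij.2.le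
        have h2 : (-(a i)) * (ψ j x' + a j * r) ≤ (-(a i)) * b j :=
          mul_le_mul_of_nonneg_left (h j) (by linarith [hij.1])
        nlinarith [h1, h2]
      · simp [hΦ, hβ, Sum.elim_inr, if_neg hij]
  · intro hx
    have hx1 : ∀ i, a i = 0 → ψ i x ≤ b i := by
      intro i hai
      have := hx (Sum.inl i)
      simpa only [hΦ, hβ, Sum.elim_inl, if_pos hai] using this
    have hx2 : ∀ i j, a i < 0 → 0 < a j →
        a j * ψ i x + (-(a i)) * ψ j x ≤ a j * b i + (-(a i)) * b j := by
      intro i j hi hj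
      have := hx (Sum.inr (i, j))
      simpa only [hΦ, hβ, Sum.elim_inr, if_pos (And.intro hi hj), LinearMap.add_apply,
        LinearMap.smul_apply, smul_eq_mul] using this
    set Neg : Finset (Fin k) := Finset.univ.filter (fun i => a i < 0) with hNeg
    set Pos : Finset (Fin k) := Finset.univ.filter (fun i => 0 < a i) with hPos
    set r : ℝ :=
      if hN : Neg.Nonempty then Neg.sup' hN (fun i => (ψ i x - b i) / (-(a i)))
      else if hP : Pos.Nonempty then Pos.inf' hP (fun j => (b j - ψ j x) / a j)
      else 0 with hr
    refine ⟨(x, r), ?_, rfl⟩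
    rw [hS, Set.mem_iInter]
    intro i
    rw [Set.mem_setOf_eq, hdec]
    rcases lt_trichotomy (a i) 0 with hai | hai | hai
    · have hiN : i ∈ Neg := by simp [hNeg, hai]
      have hN : Neg.Nonempty := ⟨i, hiN⟩
      have hrge : (ψ i x - b i) / (-(a i)) ≤ r := by
        rw [hr, dif_pos hN]
        exact Finset.le_sup' (fun i => (ψ i x - b i) / (-(a i))) hiN
      have h0 : (0:ℝ) < -(a i) := by linarith
      rw [div_le_iff₀ h0] at hrge
      nlinarith [hrge]
    · have := hx1 i hai; rw [hai]; linarith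
    · have hiP : i ∈ Pos := by simp [hPos, hai]
      have hrle : r ≤ (b i - ψ i x) / a i := by
        rw [hr]
        by_cases hN : Neg.Nonempty
        · rw [dif_pos hN]
          apply Finset.sup'_le
          intro j hjN
          have haj : a j < 0 := by simpa [hNeg] using hjN
          have h2 := hx2 j i haj hai
          rw [div_le_div_iff₀ (by linarith : (0:ℝ) < -(a j)) hai]
          nlinarith [h2]
        · rw [dif_neg hN, dif_pos ⟨i, hiP⟩]
          exact Finset.inf'_le _ hiP
      rw [le_div_iff₀ hai] at hrle
      nlinarith [hrle]

/-- the linear equivalence `(Fin (k+1) → ℝ) ≃ (Fin k → ℝ) × ℝ` -/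
noncomputable def myFinSuccEquiv (k : ℕ) : (Fin (k + 1) → ℝ) ≃ₗ[ℝ] (Fin k → ℝ) × ℝ where
  toFun f := (fun i => f i.succ, f 0)
  invFun g := Fin.cons g.2 g.1
  map_add' f g := rfl
  map_smul' c f := rfl
  left_inv f := by
    ext i
    refine Fin.cases ?_ ?_ i <;> simp
  right_inv g := by
    ext i <;> simp

lemma poly_proj_pi (k : ℕ) {S : Set (E × (Fin k → ℝ))} (hS : IsPolyhedron S) :
    IsPolyhedron (Prod.fst '' S) := by
  induction k with
  | zero =>
    have himg : Prod.fst '' S = (LinearMap.inl ℝ E (Fin 0 → ℝ)) ⁻¹' S := by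
      ext x
      simp only [Set.mem_image, Set.mem_preimage, LinearMap.inl_apply]
      constructor
      · rintro ⟨⟨x', f⟩, hmem, rfl⟩
        have : f = 0 := funext fun i => i.elim0
        simpa [this] using hmem
      · intro h; exact ⟨(x, 0), h, rfl⟩
    rw [himg]
    exact hS.preimage _
  | succ k ih =>
    set e : (E × (Fin (k+1) → ℝ)) ≃ₗ[ℝ] (E × (Fin k → ℝ)) × ℝ :=
      ((LinearEquiv.refl ℝ E).prodCongr (myFinSuccEquiv k)).trans
        (LinearEquiv.prodAssoc ℝ E (Fin k → ℝ) ℝ).symm with he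
    have h1 : IsPolyhedron (Prod.fst '' (e '' S)) := poly_proj_real (hS.image_equiv e)
    have h2 := ih h1
    have himg : Prod.fst '' (Prod.fst '' (e '' S)) = Prod.fst '' S := by
      ext x
      simp only [Set.mem_image, exists_exists_and_eq_and]
      constructor
      · rintro ⟨⟨x', f⟩, hmem, rfl⟩
        exact ⟨(x', f), hmem, by rfl⟩
      · rintro ⟨⟨x', f⟩, hmem, rfl⟩
        exact ⟨(x', f), hmem, by rfl⟩
    rwa [himg] at h2

lemma poly_proj_fd [Module.Finite ℝ F] [Module.Free ℝ F] {S : Set (E × F)}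
    (hS : IsPolyhedron S) : IsPolyhedron (Prod.fst '' S) := by
  set bF := Module.finBasis ℝ F
  set e : (E × F) ≃ₗ[ℝ] E × (Fin (Module.finrank ℝ F) → ℝ) :=
    (LinearEquiv.refl ℝ E).prodCongr bF.equivFun with he
  have h1 := poly_proj_pi _ (hS.image_equiv e)
  have himg : Prod.fst '' (e '' S) = Prod.fst '' S := by
    ext x
    simp only [Set.mem_image, exists_exists_and_eq_and]
    constructor
    · rintro ⟨⟨x', f⟩, hmem, rfl⟩; exact ⟨(x', f), hmem, by rfl⟩
    · rintro ⟨⟨x', f⟩, hmem, rfl⟩; exact ⟨(x', f), hmem, by rfl⟩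
  rwa [himg] at h1

lemma poly_section_closed {S : Set (E × ℝ)} (hS : IsPolyhedron S) (x : E) :
    IsClosed {s : ℝ | (x, s) ∈ S} := by
  obtain ⟨k, φ, b, rfl⟩ := hS
  have h : {s : ℝ | (x, s) ∈ ⋂ i, {z | φ i z ≤ b i}}
      = ⋂ i, {s : ℝ | φ i (x, 0) + s * φ i (0, 1) ≤ b i} := by
    ext s
    simp only [Set.mem_iInter, Set.mem_setOf_eq]
    refine forall_congr' fun i => ?_
    rw [lin_decomp]
  rw [h]
  exact isClosed_iInter fun i =>
    isClosed_le (continuous_const.add (continuous_id.mul continuous_const)) continuous_const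

/- EReal helpers -/

lemma er_coe_sum {ι : Type*} (s : Finset ι) (f : ι → ℝ) :
    ((∑ i ∈ s, f i : ℝ) : EReal) = ∑ i ∈ s, ((f i : EReal)) := by
  classical
  induction s using Finset.induction with
  | empty => simp
  | insert _ _ hni ih => rename_i i s'
                         rw [Finset.sum_insert hni, Finset.sum_insert hni, EReal.coe_add, ih]

lemma er_sum_ne_bot {ι : Type*} (s : Finset ι) (f : ι → EReal)
    (h : ∀ i ∈ s, f i ≠ ⊥) : ∑ i ∈ s, f i ≠ ⊥ := by
  classical
  induction s using Finset.induction with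
  | empty => simp
  | insert _ _ hni ih =>
    rename_i i s'
    rw [Finset.sum_insert hni]
    intro hbot
    rcases EReal.add_eq_bot_iff.mp hbot with h1 | h2
    · exact h i (Finset.mem_insert_self i s') h1
    · exact ih (fun j hj => h j (Finset.mem_insert_of_mem hj)) h2

lemma er_sum_eq_top {ι : Type*} (s : Finset ι) (f : ι → EReal)
    (h : ∀ i ∈ s, f i ≠ ⊥) {i₀ : ι} (hi₀ : i₀ ∈ s) (htop : f i₀ = ⊤) :
    ∑ i ∈ s, f i = ⊤ := by
  classical
  rw [← Finset.add_sum_erase s f hi₀, htop]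
  exact EReal.top_add_of_ne_bot
    (er_sum_ne_bot _ _ fun j hj => h j (Finset.mem_of_mem_erase hj))

lemma er_coe_mul_ne_bot (p : ℝ) (hp : 0 < p) (q : EReal) (hq : q ≠ ⊥) :
    (p : EReal) * q ≠ ⊥ := by
  induction q with
  | bot => exact absurd rfl hq
  | coe q => rw [← EReal.coe_mul]; exact EReal.coe_ne_bot _
  | top =>
    rw [EReal.mul_top_of_pos (by exact_mod_cast hp)]
    simp

end Aux


/-- In a linear-polyhedral multistage problem (polyhedral
costs `c_t^w`, linear dynamics, polyhedral final cost `ψ` on a nonempty convex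
polytope `X T`), every value function `V t` of the backward Bellman recursion
is polyhedral — provided each inner infimum is `> −∞` and each `V t` is finite
at some point.  Here, for stage `t < T`, `W t` plays the role of the noise set
`W_{t+1}` of the paper and `p t w` the probability weight `p_{t+1,w}`. -/
theorem statement10 {n m : ℕ} (hn : 0 < n) (hm : 0 < m) (T : ℕ) (hT : 1 ≤ T)
    (W : ℕ → Type) [∀ t, Fintype (W t)] [∀ t, Nonempty (W t)]
    (p : ∀ t, W t → ℝ) (hp : ∀ t, ∀ w, 0 < p t w) (hpsum : ∀ t, ∑ w, p t w = 1)
    (I : ∀ t, W t → Type) [∀ t w, Fintype (I t w)] [∀ t w, Nonempty (I t w)]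
    (a : ∀ t, ∀ w : W t, I t w →
      EuclideanSpace ℝ (Fin n) × EuclideanSpace ℝ (Fin m))
    (d : ∀ t, ∀ w : W t, I t w → ℝ)
    (P : ∀ t, W t → Set (EuclideanSpace ℝ (Fin n) × EuclideanSpace ℝ (Fin m)))
    (hPne : ∀ t < T, ∀ w : W t, (P t w).Nonempty)
    (hPpoly : ∀ t < T, ∀ w : W t, IsPolyhedron (P t w))
    -- the polyhedral costs
    (c : ∀ t, W t → EuclideanSpace ℝ (Fin n) × EuclideanSpace ℝ (Fin m) → EReal)
    (hcin : ∀ t < T, ∀ w : W t, ∀ q ∈ P t w, c t w q =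
      ((Finset.univ.sup' Finset.univ_nonempty
        (fun i : I t w => ⟪(a t w i).1, q.1⟫ + ⟪(a t w i).2, q.2⟫ + d t w i) : ℝ) : EReal))
    (hcout : ∀ t < T, ∀ w : W t, ∀ q ∉ P t w, c t w q = (⊤ : EReal))
    -- the linear dynamics
    (A : ∀ t, W t → (EuclideanSpace ℝ (Fin n) →ₗ[ℝ] EuclideanSpace ℝ (Fin n)))
    (B : ∀ t, W t → (EuclideanSpace ℝ (Fin m) →ₗ[ℝ] EuclideanSpace ℝ (Fin n)))
    -- the final cost, polyhedral on the nonempty convex polytope X T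
    (IT : Type) [Fintype IT] [Nonempty IT]
    (cT : IT → EuclideanSpace ℝ (Fin n)) (dT : IT → ℝ)
    (XT : Set (EuclideanSpace ℝ (Fin n)))
    (hXTne : XT.Nonempty) (hXTpoly : IsPolyhedron XT) (hXTcp : IsCompact XT)
    (ψ : EuclideanSpace ℝ (Fin n) → EReal)
    (hψin : ∀ x ∈ XT, ψ x =
      ((Finset.univ.sup' Finset.univ_nonempty
        (fun i : IT => ⟪cT i, x⟫ + dT i) : ℝ) : EReal))
    (hψout : ∀ x ∉ XT, ψ x = (⊤ : EReal))
    -- the value functions, by backward recursion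
    (V : ℕ → EuclideanSpace ℝ (Fin n) → EReal)
    (hVT : ∀ x, V T x = ψ x)
    (hVrec : ∀ t < T, ∀ x, V t x = ∑ w, (p t w : EReal) *
      (⨅ u, (c t w (x, u) + V (t + 1) (A t w x + B t w u))))
    -- properness conditions
    (hbdd : ∀ t < T, ∀ w : W t, ∀ x,
      (⨅ u, (c t w (x, u) + V (t + 1) (A t w x + B t w u))) ≠ (⊥ : EReal))
    (hfin : ∀ t ≤ T, ∃ x₀, V t x₀ ≠ (⊤ : EReal)) :
    ∀ t ≤ T, IsPolyhedralFn (V t) := by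
  classical
  -- V is never -∞
  have hVnb : ∀ t ≤ T, ∀ x, V t x ≠ ⊥ := by
    intro t ht x
    rcases eq_or_lt_of_le ht with rfl | hlt
    · rw [hVT]
      by_cases hx : x ∈ XT
      · rw [hψin x hx]; exact EReal.coe_ne_bot _
      · rw [hψout x hx]; simp
    · rw [hVrec t hlt x]
      exact er_sum_ne_bot _ _ fun w _ =>
        er_coe_mul_ne_bot _ (hp t w) _ (hbdd t hlt w x)
  -- base case
  have hbase : IsPolyhedralFn (V T) := by
    obtain ⟨kX, φX, bX, hXrep⟩ := hXTpoly
    have hchar : ∀ (x : EuclideanSpace ℝ (Fin n)) (r : ℝ),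
        V T x ≤ (r : EReal) ↔ (x ∈ XT ∧ ∀ i : IT, ⟪cT i, x⟫ + dT i ≤ r) := by
      intro x r
      rw [hVT]
      by_cases hx : x ∈ XT
      · rw [hψin x hx, EReal.coe_le_coe_iff, Finset.sup'_le_iff]
        simp [hx]
      · rw [hψout x hx]
        simp only [hx, false_and, iff_false]
        intro h
        exact (EReal.coe_ne_top r) (top_le_iff.mp h)
    constructor
    · obtain ⟨x₀, hx₀⟩ := hXTne
      refine ⟨(x₀, Finset.univ.sup' Finset.univ_nonempty (fun i : IT => ⟪cT i, x₀⟫ + dT i)), ?_⟩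
      rw [Set.mem_setOf_eq]
      rw [show V T (x₀, Finset.univ.sup' Finset.univ_nonempty
          (fun i : IT => ⟪cT i, x₀⟫ + dT i)).1
          ≤ (((x₀, Finset.univ.sup' Finset.univ_nonempty
          (fun i : IT => ⟪cT i, x₀⟫ + dT i)).2 : ℝ) : EReal)
        ↔ (x₀ ∈ XT ∧ ∀ i : IT, ⟪cT i, x₀⟫ + dT i ≤ Finset.univ.sup' Finset.univ_nonempty
          (fun i : IT => ⟪cT i, x₀⟫ + dT i)) from hchar x₀ _]
      exact ⟨hx₀, fun i => Finset.le_sup' (fun i : IT => ⟪cT i, x₀⟫ + dT i)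
        (Finset.mem_univ i)⟩
    · refine isPolyhedron_of_fintype (ι := Fin kX ⊕ IT)
        (Sum.elim (fun l => (φX l).comp (LinearMap.fst ℝ _ ℝ))
          (fun i => ((innerSL ℝ (cT i)).toLinearMap).comp (LinearMap.fst ℝ _ ℝ)
            - LinearMap.snd ℝ _ ℝ))
        (Sum.elim bX (fun i => - dT i)) ?_
      ext q
      obtain ⟨x, r⟩ := q
      rw [Set.mem_setOf_eq]
      rw [show V T (x, r).1 ≤ ((x, r).2 : EReal) ↔ (x ∈ XT ∧ ∀ i : IT, ⟪cT i, x⟫ + dT i ≤ r)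
        from hchar x r]
      simp only [Set.mem_iInter, Sum.forall, Sum.elim_inl, Sum.elim_inr, Set.mem_setOf_eq,
        LinearMap.coe_comp, Function.comp_apply, LinearMap.sub_apply, LinearMap.fst_apply,
        LinearMap.snd_apply, ContinuousLinearMap.coe_coe, innerSL_apply_apply]
      constructor
      · rintro ⟨hx, hi⟩
        have hmem := hXrep ▸ hx
        rw [Set.mem_iInter] at hmem
        exact ⟨fun l => hmem l, fun i => by have := hi i; linarith⟩
      · rintro ⟨hl, hi⟩
        refine ⟨?_, fun i => by have := hi i; linarith⟩
        rw [hXrep, Set.mem_iInter]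
        exact fun l => hl l
  -- recursion step
  have hstep : ∀ t, t < T → IsPolyhedralFn (V (t + 1)) → IsPolyhedralFn (V t) := by
    intro t ht ih
    obtain ⟨-, hpoly'⟩ := ih
    obtain ⟨k', φ', b', hEpi'⟩ := hpoly'
    have hVmem : ∀ (y : EuclideanSpace ℝ (Fin n)) (s : ℝ),
        V (t + 1) y ≤ (s : EReal) ↔ ∀ j, φ' j (y, s) ≤ b' j := by
      intro y s
      have h := Set.ext_iff.mp hEpi' (y, s)
      simpa only [Set.mem_setOf_eq, Set.mem_iInter] using h
    have key : ∀ w : W t, IsPolyhedron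
        {q : EuclideanSpace ℝ (Fin n) × ℝ |
          (⨅ u, (c t w (q.1, u) + V (t + 1) (A t w q.1 + B t w u))) ≤ (q.2 : EReal)} := by
      intro w
      obtain ⟨kP, π, βP, hPrep⟩ := hPpoly t ht w
      have hPmem : ∀ q, q ∈ P t w ↔ ∀ l, π l q ≤ βP l := by
        intro q
        rw [hPrep]
        simp only [Set.mem_iInter, Set.mem_setOf_eq]
      have hchar : ∀ (x : EuclideanSpace ℝ (Fin n)) (r : ℝ) (u : EuclideanSpace ℝ (Fin m)),
          c t w (x, u) + V (t + 1) (A t w x + B t w u) ≤ (r : EReal) ↔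
          ((x, u) ∈ P t w ∧ ∀ i : I t w,
            V (t + 1) (A t w x + B t w u)
              ≤ ((r - (⟪(a t w i).1, x⟫ + ⟪(a t w i).2, u⟫ + d t w i) : ℝ) : EReal)) := by
        intro x r u
        have hyb : V (t + 1) (A t w x + B t w u) ≠ ⊥ := hVnb (t + 1) (by omega) _
        constructor
        · intro h
          have hP : (x, u) ∈ P t w := by
            by_contra hPn
            rw [hcout t ht w _ hPn, EReal.top_add_of_ne_bot hyb] at h
            exact (EReal.coe_ne_top r) (top_le_iff.mp h)
          refine ⟨hP, fun i => ?_⟩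
          have hc := hcin t ht w (x, u) hP
          dsimp only at hc
          rw [hc] at h
          have hyt : V (t + 1) (A t w x + B t w u) ≠ ⊤ := by
            intro htop
            rw [htop, EReal.add_top_of_ne_bot (EReal.coe_ne_bot _)] at h
            exact (EReal.coe_ne_top r) (top_le_iff.mp h)
          have hv := EReal.coe_toReal hyt hyb
          rw [← hv, ← EReal.coe_add, EReal.coe_le_coe_iff] at h
          rw [← hv, EReal.coe_le_coe_iff]
          have hle : ⟪(a t w i).1, x⟫ + ⟪(a t w i).2, u⟫ + d t w i ≤
              Finset.univ.sup' Finset.univ_nonempty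
                (fun i : I t w => ⟪(a t w i).1, x⟫ + ⟪(a t w i).2, u⟫ + d t w i) :=
            Finset.le_sup' (fun i : I t w => ⟪(a t w i).1, x⟫ + ⟪(a t w i).2, u⟫ + d t w i)
              (Finset.mem_univ i)
          linarith
        · rintro ⟨hP, h⟩
          have hc := hcin t ht w (x, u) hP
          dsimp only at hc
          rw [hc]
          obtain ⟨i₀, -, hi₀⟩ := Finset.exists_mem_eq_sup'
            (Finset.univ_nonempty (α := I t w))
            (fun i : I t w => ⟪(a t w i).1, x⟫ + ⟪(a t w i).2, u⟫ + d t w i)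
          have hre : (Finset.univ.sup' Finset.univ_nonempty
              (fun i : I t w => ⟪(a t w i).1, x⟫ + ⟪(a t w i).2, u⟫ + d t w i))
              + (r - (⟪(a t w i₀).1, x⟫ + ⟪(a t w i₀).2, u⟫ + d t w i₀)) = r := by
            rw [hi₀]; ring
          calc ((Finset.univ.sup' Finset.univ_nonempty
              (fun i : I t w => ⟪(a t w i).1, x⟫ + ⟪(a t w i).2, u⟫ + d t w i) : ℝ) : EReal)
                + V (t + 1) (A t w x + B t w u)
              ≤ ((Finset.univ.sup' Finset.univ_nonempty
              (fun i : I t w => ⟪(a t w i).1, x⟫ + ⟪(a t w i).2, u⟫ + d t w i) : ℝ) : EReal)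
                + ((r - (⟪(a t w i₀).1, x⟫ + ⟪(a t w i₀).2, u⟫ + d t w i₀) : ℝ) : EReal) :=
                add_le_add_right (h i₀) _
            _ = (r : EReal) := by rw [← EReal.coe_add, hre]
      -- the epigraph of the integrand, with `u` moved to the last coordinate
      set EpiG : Set ((EuclideanSpace ℝ (Fin n) × ℝ) × EuclideanSpace ℝ (Fin m)) :=
        {z | c t w (z.1.1, z.2) + V (t + 1) (A t w z.1.1 + B t w z.2) ≤ (z.1.2 : EReal)}
        with hEpiGdef
      have hEpiGpoly : IsPolyhedron EpiG := by
        set X1 : ((EuclideanSpace ℝ (Fin n) × ℝ) × EuclideanSpace ℝ (Fin m))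
            →ₗ[ℝ] EuclideanSpace ℝ (Fin n) :=
          (LinearMap.fst ℝ (EuclideanSpace ℝ (Fin n)) ℝ).comp
            (LinearMap.fst ℝ (EuclideanSpace ℝ (Fin n) × ℝ) (EuclideanSpace ℝ (Fin m)))
          with hX1
        set R1 : ((EuclideanSpace ℝ (Fin n) × ℝ) × EuclideanSpace ℝ (Fin m)) →ₗ[ℝ] ℝ :=
          (LinearMap.snd ℝ (EuclideanSpace ℝ (Fin n)) ℝ).comp
            (LinearMap.fst ℝ (EuclideanSpace ℝ (Fin n) × ℝ) (EuclideanSpace ℝ (Fin m)))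
          with hR1
        set U1 : ((EuclideanSpace ℝ (Fin n) × ℝ) × EuclideanSpace ℝ (Fin m))
            →ₗ[ℝ] EuclideanSpace ℝ (Fin m) :=
          LinearMap.snd ℝ (EuclideanSpace ℝ (Fin n) × ℝ) (EuclideanSpace ℝ (Fin m)) with hU1
        refine isPolyhedron_of_fintype (ι := Fin kP ⊕ (I t w × Fin k'))
          (Sum.elim
            (fun l => (π l).comp (X1.prod U1))
            (fun (ij : I t w × Fin k') => (φ' ij.2).comp
              ((((A t w).comp X1 + (B t w).comp U1)).prod
                (R1 - ((innerSL ℝ (a t w ij.1).1).toLinearMap).comp X1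
                    - ((innerSL ℝ (a t w ij.1).2).toLinearMap).comp U1))))
          (Sum.elim βP (fun (ij : I t w × Fin k') =>
            b' ij.2 + d t w ij.1 * (φ' ij.2 (0, 1)))) ?_
        rw [hEpiGdef]
        ext z
        obtain ⟨⟨x, r⟩, u⟩ := z
        rw [Set.mem_setOf_eq]
        rw [show c t w (((x, r), u).1.1, ((x, r), u).2)
            + V (t + 1) (A t w (((x, r), u).1.1) + B t w (((x, r), u).2))
            ≤ ((((x, r), u).1.2 : ℝ) : EReal)
          ↔ ((x, u) ∈ P t w ∧ ∀ i : I t w,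
            V (t + 1) (A t w x + B t w u)
              ≤ ((r - (⟪(a t w i).1, x⟫ + ⟪(a t w i).2, u⟫ + d t w i) : ℝ) : EReal))
          from hchar x r u]
        rw [hPmem (x, u)]
        simp only [Set.mem_iInter, Sum.forall, Prod.forall, Sum.elim_inl, Sum.elim_inr,
          Set.mem_setOf_eq, LinearMap.coe_comp, Function.comp_apply, LinearMap.prod_apply,
          Function.prod, LinearMap.add_apply, LinearMap.sub_apply, LinearMap.fst_apply,
          LinearMap.snd_apply, ContinuousLinearMap.coe_coe, innerSL_apply_apply, hVmem,
          hX1, hR1, hU1]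
        constructor
        · rintro ⟨h1, h2⟩
          refine ⟨fun l => h1 l, fun i j => ?_⟩
          have h3 := h2 i j
          rw [lin_decomp] at h3 ⊢
          ring_nf at h3 ⊢
          linarith
        · rintro ⟨h1, h2⟩
          refine ⟨fun l => h1 l, fun i j => ?_⟩
          have h3 := h2 i j
          rw [lin_decomp] at h3 ⊢
          ring_nf at h3 ⊢
          linarith
      have hPr : IsPolyhedron (Prod.fst '' EpiG) := poly_proj_fd hEpiGpoly
      have hQepi : {q : EuclideanSpace ℝ (Fin n) × ℝ |
          (⨅ u, (c t w (q.1, u) + V (t + 1) (A t w q.1 + B t w u))) ≤ (q.2 : EReal)}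
          = Prod.fst '' EpiG := by
        ext q
        obtain ⟨x, r⟩ := q
        simp only [Set.mem_setOf_eq]
        constructor
        · intro hle
          have hQb : (⨅ u, (c t w (x, u) + V (t + 1) (A t w x + B t w u))) ≠ ⊥ :=
            hbdd t ht w x
          have hQt : (⨅ u, (c t w (x, u) + V (t + 1) (A t w x + B t w u))) ≠ ⊤ := by
            intro htop
            rw [htop] at hle
            exact (EReal.coe_ne_top r) (top_le_iff.mp hle)
          have hq : (((⨅ u, (c t w (x, u) + V (t + 1) (A t w x + B t w u))).toReal : ℝ) : EReal)
              = ⨅ u, (c t w (x, u) + V (t + 1) (A t w x + B t w u)) :=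
            EReal.coe_toReal hQt hQb
          set qq := (⨅ u, (c t w (x, u) + V (t + 1) (A t w x + B t w u))).toReal with hqq
          have hsub : Set.Ioi qq ⊆ {s : ℝ | (x, s) ∈ Prod.fst '' EpiG} := by
            intro s hs
            have hlt : (⨅ u, (c t w (x, u) + V (t + 1) (A t w x + B t w u))) < (s : EReal) := by
              rw [← hq]
              exact_mod_cast hs
            obtain ⟨u, hu⟩ := iInf_lt_iff.mp hlt
            exact ⟨((x, s), u), hu.le, rfl⟩
          have hcl : IsClosed {s : ℝ | (x, s) ∈ Prod.fst '' EpiG} := poly_section_closed hPr x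
          have hqmem : (x, qq) ∈ Prod.fst '' EpiG := by
            have h1 : qq ∈ closure (Set.Ioi qq) := by
              rw [closure_Ioi]; exact Set.self_mem_Ici
            have h2 := closure_mono hsub h1
            rwa [hcl.closure_eq] at h2
          obtain ⟨z, hz, hz1⟩ := hqmem
          refine ⟨((x, r), z.2), ?_, rfl⟩
          rw [hEpiGdef, Set.mem_setOf_eq] at hz ⊢
          rw [hz1] at hz
          have hqr : (qq : EReal) ≤ (r : EReal) := by rw [hq]; exact hle
          exact le_trans hz hqr
        · rintro ⟨z, hz, hz1⟩
          rw [hEpiGdef, Set.mem_setOf_eq] at hz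
          rw [hz1] at hz
          exact le_trans (iInf_le _ z.2) hz
      rw [hQepi]
      exact hPr
    -- representation of each epigraph of the partial minimization
    choose kQ ηQ βQ hQrep using key
    have hQmem : ∀ (w : W t) (x : EuclideanSpace ℝ (Fin n)) (r : ℝ),
        (⨅ u, (c t w (x, u) + V (t + 1) (A t w x + B t w u))) ≤ (r : EReal)
        ↔ ∀ j, ηQ w j (x, r) ≤ βQ w j := by
      intro w x r
      have h := Set.ext_iff.mp (hQrep w) (x, r)
      simpa only [Set.mem_setOf_eq, Set.mem_iInter] using h
    set SS : Set ((EuclideanSpace ℝ (Fin n) × ℝ) × (W t → ℝ)) :=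
      {z | (∀ w, ∀ j, ηQ w j (z.1.1, z.2 w) ≤ βQ w j) ∧ ∑ w, p t w * z.2 w ≤ z.1.2}
      with hSSdef
    have hSSpoly : IsPolyhedron SS := by
      refine isPolyhedron_of_fintype (ι := (Σ w : W t, Fin (kQ w)) ⊕ Unit)
        (Sum.elim
          (fun (wj : Σ w : W t, Fin (kQ w)) => (ηQ wj.1 wj.2).comp
            (((LinearMap.fst ℝ (EuclideanSpace ℝ (Fin n)) ℝ).comp
                (LinearMap.fst ℝ (EuclideanSpace ℝ (Fin n) × ℝ) (W t → ℝ))).prod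
              ((LinearMap.proj wj.1).comp
                (LinearMap.snd ℝ (EuclideanSpace ℝ (Fin n) × ℝ) (W t → ℝ)))))
          (fun _ => (∑ w, p t w • ((LinearMap.proj w).comp
              (LinearMap.snd ℝ (EuclideanSpace ℝ (Fin n) × ℝ) (W t → ℝ))))
            - (LinearMap.snd ℝ (EuclideanSpace ℝ (Fin n)) ℝ).comp
                (LinearMap.fst ℝ (EuclideanSpace ℝ (Fin n) × ℝ) (W t → ℝ))))
        (Sum.elim (fun (wj : Σ w : W t, Fin (kQ w)) => βQ wj.1 wj.2) (fun _ => (0:ℝ))) ?_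
      rw [hSSdef]
      ext z
      obtain ⟨⟨x, r⟩, ρ⟩ := z
      simp only [Set.mem_setOf_eq, Set.mem_iInter, Sum.forall, Sigma.forall, Sum.elim_inl,
        Sum.elim_inr, LinearMap.coe_comp, Function.comp_apply, LinearMap.prod_apply, Function.prod,
        LinearMap.sub_apply, LinearMap.coe_sum, Finset.sum_apply, LinearMap.smul_apply,
        LinearMap.proj_apply, LinearMap.fst_apply, LinearMap.snd_apply, smul_eq_mul]
      constructor
      · rintro ⟨h1, h2⟩
        exact ⟨fun w j => h1 w j, fun _ => by linarith⟩
      · rintro ⟨h1, h2⟩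
        exact ⟨fun w j => h1 w j, by have := h2 (); linarith⟩
    have hEpiV : {q : EuclideanSpace ℝ (Fin n) × ℝ | V t q.1 ≤ (q.2 : EReal)}
        = Prod.fst '' SS := by
      ext q
      obtain ⟨x, r⟩ := q
      rw [Set.mem_setOf_eq]
      rw [show V t (x, r).1 = V t x from rfl]
      rw [hVrec t ht x]
      constructor
      · intro hle
        have hnb : ∀ w, (⨅ u, (c t w (x, u) + V (t + 1) (A t w x + B t w u))) ≠ ⊥ :=
          fun w => hbdd t ht w x
        have hnt : ∀ w, (⨅ u, (c t w (x, u) + V (t + 1) (A t w x + B t w u))) ≠ ⊤ := by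
          intro w htop
          have hsumtop : (∑ w, (p t w : EReal)
              * (⨅ u, (c t w (x, u) + V (t + 1) (A t w x + B t w u)))) = ⊤ :=
            er_sum_eq_top _ _ (fun w _ => er_coe_mul_ne_bot _ (hp t w) _ (hnb w))
              (Finset.mem_univ w)
              (by rw [htop]; exact EReal.mul_top_of_pos (by exact_mod_cast hp t w))
          rw [hsumtop] at hle
          exact (EReal.coe_ne_top r) (top_le_iff.mp hle)
        set ρ : W t → ℝ :=
          fun w => (⨅ u, (c t w (x, u) + V (t + 1) (A t w x + B t w u))).toReal with hρ
        have hρeq : ∀ w, ((ρ w : ℝ) : EReal)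
            = ⨅ u, (c t w (x, u) + V (t + 1) (A t w x + B t w u)) :=
          fun w => EReal.coe_toReal (hnt w) (hnb w)
        have hsum : (∑ w, (p t w : EReal)
            * (⨅ u, (c t w (x, u) + V (t + 1) (A t w x + B t w u))))
            = ((∑ w, p t w * ρ w : ℝ) : EReal) := by
          rw [er_coe_sum]
          refine Finset.sum_congr rfl fun w _ => ?_
          rw [← hρeq w, ← EReal.coe_mul]
        refine ⟨((x, r), ρ), ?_, rfl⟩
        rw [hSSdef, Set.mem_setOf_eq]
        constructor
        · intro w
          exact (hQmem w x (ρ w)).mp (le_of_eq (hρeq w).symm)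
        · rw [hsum, EReal.coe_le_coe_iff] at hle
          exact hle
      · rintro ⟨z, hz, hz1⟩
        rw [hSSdef, Set.mem_setOf_eq] at hz
        obtain ⟨h1, h2⟩ := hz
        rw [hz1] at h1 h2
        have hwle : ∀ w, (⨅ u, (c t w (x, u) + V (t + 1) (A t w x + B t w u)))
            ≤ ((z.2 w : ℝ) : EReal) := fun w => (hQmem w x (z.2 w)).mpr (h1 w)
        have hterm : ∀ w, (p t w : EReal)
            * (⨅ u, (c t w (x, u) + V (t + 1) (A t w x + B t w u)))
            ≤ ((p t w * z.2 w : ℝ) : EReal) := by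
          intro w
          have hb := hbdd t ht w x
          have ht' : (⨅ u, (c t w (x, u) + V (t + 1) (A t w x + B t w u))) ≠ ⊤ := by
            intro htop
            have := hwle w
            rw [htop] at this
            exact (EReal.coe_ne_top _) (top_le_iff.mp this)
          have hre := EReal.coe_toReal ht' hb
          rw [← hre, ← EReal.coe_mul, EReal.coe_le_coe_iff]
          have hle2 : (⨅ u, (c t w (x, u) + V (t + 1) (A t w x + B t w u))).toReal ≤ z.2 w := by
            rw [← EReal.coe_le_coe_iff, hre]
            exact hwle w
          exact mul_le_mul_of_nonneg_left hle2 (hp t w).le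
        calc (∑ w, (p t w : EReal)
            * (⨅ u, (c t w (x, u) + V (t + 1) (A t w x + B t w u))))
            ≤ ∑ w, ((p t w * z.2 w : ℝ) : EReal) :=
              Finset.sum_le_sum (fun w _ => hterm w)
          _ = ((∑ w, p t w * z.2 w : ℝ) : EReal) := (er_coe_sum _ _).symm
          _ ≤ (r : EReal) := by exact_mod_cast h2
    constructor
    · obtain ⟨x₀, hx₀⟩ := hfin t (le_of_lt ht)
      have hb := hVnb t (le_of_lt ht) x₀
      exact ⟨(x₀, (V t x₀).toReal), le_of_eq (EReal.coe_toReal hx₀ hb).symm⟩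
    · rw [hEpiV]
      exact poly_proj_fd hSSpoly
  -- downward induction
  have main : ∀ s, s ≤ T → IsPolyhedralFn (V (T - s)) := by
    intro s
    induction s with
    | zero => intro _; simpa using hbase
    | succ s ihs =>
      intro hs
      have h1 : T - (s + 1) < T := by omega
      have h2 : T - (s + 1) + 1 = T - s := by omega
      exact hstep (T - (s + 1)) h1 (by rw [h2]; exact ihs (by omega))
  intro t ht
  have heq : T - (T - t) = t := by omega
  rw [← heq]
  exact main (T - t) (by omega)
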